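/- There exists a Marczewski null subset of Cantor space of cardinality continuum. -/

import Mathlib

open Cardinal

abbrev Cantor : Type := ℕ → Bool

def cAdd (x y : Cantor) : Cantor := fun n => xor (x n) (y n)

def setAdd (X Y : Set Cantor) : Set Cantor := Set.image2 cAdd X Y

def IsTree (p : Set (List Bool)) : Prop := ∀ σ ∈ p, ∀ τ : List Bool, τ <+: σ → τ ∈ p

def Splits (p : Set (List Bool)) (σ : List Bool) : Prop :=
  σ ++ [false] ∈ p ∧ σ ++ [true] ∈ p

def PerfTree (p : Set (List Bool)) : Prop :=
  p.Nonempty ∧ IsTree p ∧ ∀ σ ∈ p, ∃ τ ∈ p, σ <+: τ ∧ Splits p τ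

def seg (x : Cantor) (n : ℕ) : List Bool := List.ofFn (fun i : Fin n => x i)

def body (p : Set (List Bool)) : Set Cantor := { x | ∀ n, seg x n ∈ p }

def shiftNode (t : Cantor) (σ : List Bool) : List Bool :=
  σ.mapIdx fun i b => xor b (t i)

def treeAdd (p : Set (List Bool)) (t : Cantor) : Set (List Bool) := shiftNode t '' p

def SkewT (p : Set (List Bool)) : Prop :=
  ∀ σ ∈ p, ∀ τ ∈ p, Splits p σ → Splits p τ → σ.length = τ.length → σ = τ

def PerfectSet (P : Set Cantor) : Prop := Perfect P ∧ P.Nonempty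

def MarczewskiNull (Y : Set Cantor) : Prop :=
  ∀ P : Set Cantor, PerfectSet P → ∃ Q, PerfectSet Q ∧ Q ⊆ P ∧ Q ∩ Y = ∅

def MarczewskiNullT (Y : Set Cantor) : Prop :=
  ∀ p, PerfTree p → ∃ q, PerfTree q ∧ q ⊆ p ∧ body q ∩ Y = ∅

def Shiftable (X : Set Cantor) : Prop :=
  ∀ Y, MarczewskiNull Y → setAdd X Y ≠ Set.univ


section MNaux
open Cardinal Set TopologicalSpace

lemma mk_cantor : #Cantor = 𝔠 := by
  rw [Cardinal.mk_arrow]; simp [Cardinal.two_power_aleph0]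

lemma perfect_inj {C : Set Cantor} (hC : Perfect C) (hne : C.Nonempty) :
    ∃ f : (ℕ → Bool) → Cantor, Set.range f ⊆ C ∧ Continuous f ∧ Function.Injective f := by
  letI := upgradeIsCompletelyMetrizable Cantor
  exact hC.exists_nat_bool_injection hne

def Az (z : Cantor) : Set Cantor := {x | ∀ n, x (2*n) = z n}

lemma Az_nonempty (z : Cantor) : (Az z).Nonempty := by
  refine ⟨fun m => if m % 2 = 0 then z (m / 2) else false, fun n => ?_⟩
  have h1 : (2*n) % 2 = 0 := by omega
  have h2 : (2*n) / 2 = n := by omega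
  simp [h1, h2]

lemma Az_closed (z : Cantor) : IsClosed (Az z) := by
  have : Az z = ⋂ n, (fun x : Cantor => x (2*n)) ⁻¹' {z n} := by
    ext x; simp [Az]
  rw [this]
  exact isClosed_iInter fun n => (isClosed_discrete _).preimage (continuous_apply _)

lemma exists_odd_not_mem {I : Set ℕ} (hI : I.Finite) : ∃ m, m ∉ I ∧ m % 2 = 1 := by
  have hinf : {m : ℕ | m % 2 = 1}.Infinite := by
    apply Set.infinite_of_injective_forall_mem (f := fun k : ℕ => 2*k+1)
    · intro a b h; simp only [] at h; omega
    · intro a; simp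
  obtain ⟨m, hm1, hm2⟩ := (hinf.diff hI).nonempty
  exact ⟨m, hm2, hm1⟩

lemma nhds_finite_support {x : Cantor} {U : Set Cantor} (hU : U ∈ nhds x) :
    ∃ I : Set ℕ, I.Finite ∧ {y : Cantor | ∀ i ∈ I, y i = x i} ⊆ U := by
  rw [nhds_pi, Filter.mem_pi] at hU
  obtain ⟨I, hIf, t, ht, hsub⟩ := hU
  refine ⟨I, hIf, fun y hy => hsub fun i hi => ?_⟩
  have : t i ∈ nhds (x i) := ht i
  have hxi : x i ∈ t i := mem_of_mem_nhds this
  rw [Set.mem_setOf_eq] at hy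
  rw [hy i hi]; exact hxi

lemma Az_preperfect (z : Cantor) : Preperfect (Az z) := by
  rw [preperfect_iff_nhds]
  intro x hx U hU
  obtain ⟨I, hIf, hsub⟩ := nhds_finite_support hU
  obtain ⟨m, hmI, hmodd⟩ := exists_odd_not_mem hIf
  refine ⟨Function.update x m (!(x m)), ⟨hsub fun i hi => ?_, fun n => ?_⟩, ?_⟩
  · exact Function.update_of_ne (fun h : i = m => hmI (h ▸ hi)) _ _
  · rw [Function.update_of_ne (by omega : 2*n ≠ m)]; exact hx n
  · intro h
    have := congrFun h m
    rw [Function.update_self] at this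
    exact (Bool.not_ne_self _) this

lemma Az_perfect (z : Cantor) : Perfect (Az z) := ⟨Az_closed z, Az_preperfect z⟩

lemma Az_disjoint {z z' : Cantor} (h : z ≠ z') : Disjoint (Az z) (Az z') := by
  rw [Set.disjoint_left]
  intro x hx hx'
  apply h; funext n
  rw [← hx n, ← hx' n]

lemma image_perfect {f : Cantor → Cantor} (hf : Continuous f) (hinj : Function.Injective f)
    {A : Set Cantor} (hA : Perfect A) : Perfect (f '' A) := by
  constructor
  · exact ((hA.closed.isCompact).image hf).isClosed
  · rw [preperfect_iff_nhds]
    rintro _ ⟨a, ha, rfl⟩ U hU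
    have : f ⁻¹' U ∈ nhds a := hf.continuousAt.preimage_mem_nhds hU
    obtain ⟨y, ⟨hyU, hyA⟩, hya⟩ := (preperfect_iff_nhds.mp hA.acc) a ha _ this
    exact ⟨f y, ⟨hyU, mem_image_of_mem f hyA⟩, fun h => hya (hinj h)⟩

/-- continuum many points in a perfect set -/
lemma continuum_le_perfect {C : Set Cantor} (hC : Perfect C) (hne : C.Nonempty) : 𝔠 ≤ #C := by
  obtain ⟨f, hr, -, hinj⟩ := perfect_inj hC hne
  calc 𝔠 = #Cantor := mk_cantor.symm
  _ = #(range f) := (Cardinal.mk_range_eq f hinj).symm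
  _ ≤ #C := Cardinal.mk_le_mk_of_subset hr

/-- continuum many pairwise disjoint perfect nonempty subsets -/
lemma disjoint_family {C : Set Cantor} (hC : Perfect C) (hne : C.Nonempty) :
    ∃ D : Cantor → Set Cantor, (∀ z, Perfect (D z) ∧ (D z).Nonempty ∧ D z ⊆ C) ∧
      (∀ z z', z ≠ z' → Disjoint (D z) (D z')) := by
  obtain ⟨f, hr, hcont, hinj⟩ := perfect_inj hC hne
  refine ⟨fun z => f '' Az z, fun z => ⟨image_perfect hcont hinj (Az_perfect z),
    (Az_nonempty z).image f, (image_subset_range f _).trans hr⟩, fun z z' h => ?_⟩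
  exact (Set.disjoint_image_iff hinj).mpr (Az_disjoint h)

/-- avoid a set of size < continuum -/
lemma avoid_small {C : Set Cantor} (hC : Perfect C) (hne : C.Nonempty) {S : Set Cantor}
    (hS : #S < 𝔠) : ∃ Q, Perfect Q ∧ Q.Nonempty ∧ Q ⊆ C ∧ Q ∩ S = ∅ := by
  obtain ⟨D, hD, hdisj⟩ := disjoint_family hC hne
  by_contra h
  push_neg at h
  have hx : ∀ z : Cantor, ∃ x, x ∈ D z ∩ S := by
    intro z
    have := h (D z) (hD z).1 (hD z).2.1 (hD z).2.2
    exact this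
  choose g hg using hx
  have hginj : Function.Injective g := by
    intro z z' hzz
    by_contra hne'
    exact (Set.disjoint_left.mp (hdisj z z' hne')) (hg z).1 (hzz ▸ (hg z').1)
  have : 𝔠 ≤ #S := by
    rw [← mk_cantor]
    exact Cardinal.mk_le_of_injective (f := fun z => (⟨g z, (hg z).2⟩ : S))
      fun a b hab => hginj (congrArg Subtype.val hab)
  exact absurd this (not_le.mpr hS)

/-- at most continuum many closed subsets -/
lemma mk_closed_le {M : Set (Set Cantor)} (hM : ∀ C ∈ M, IsClosed C) : #M ≤ 𝔠 := by
  set B := countableBasis Cantor with hB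
  have hbasis := isBasis_countableBasis Cantor
  have hcount : B.Countable := countable_countableBasis Cantor
  set Φ : M → Set B := fun C => {s : B | (s : Set Cantor) ⊆ (↑C : Set Cantor)ᶜ} with hΦ
  have hinj : Function.Injective Φ := by
    intro C C' h
    have key : ∀ D : M, ((D : Set Cantor)ᶜ) = ⋃₀ {s ∈ B | s ⊆ (D : Set Cantor)ᶜ} := fun D =>
      hbasis.open_eq_sUnion' (hM D D.2).isOpen_compl
    have hsets : {s ∈ B | s ⊆ (↑C : Set Cantor)ᶜ} = {s ∈ B | s ⊆ (↑C' : Set Cantor)ᶜ} := by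
      ext s
      constructor
      · rintro ⟨hsB, hss⟩
        have h2 : (⟨s, hsB⟩ : B) ∈ Φ C := hss
        rw [h] at h2
        exact ⟨hsB, h2⟩
      · rintro ⟨hsB, hss⟩
        have h2 : (⟨s, hsB⟩ : B) ∈ Φ C' := hss
        rw [← h] at h2
        exact ⟨hsB, h2⟩
    have : ((C : Set Cantor)ᶜ) = ((C' : Set Cantor)ᶜ) := by
      rw [key C, key C', hsets]
    have := congrArg compl this
    simpa using Subtype.ext (by simpa using this)
  calc #M ≤ #(Set B) := Cardinal.mk_le_of_injective hinj
  _ = 2 ^ #B := by rw [Cardinal.mk_set]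
  _ ≤ 2 ^ ℵ₀ := Cardinal.power_le_power_left two_ne_zero (Cardinal.mk_le_aleph0_iff.mpr hcount)
  _ = 𝔠 := Cardinal.two_power_aleph0

def MNCompat (P Q : Set Cantor) : Prop := ∃ R, Perfect R ∧ R.Nonempty ∧ R ⊆ P ∩ Q

def MNIsAnti (A : Set (Set Cantor)) : Prop :=
  (∀ P ∈ A, Perfect P ∧ P.Nonempty) ∧ A.Pairwise fun P Q => ¬ MNCompat P Q

lemma compat_self {P : Set Cantor} (h : Perfect P) (hne : P.Nonempty) : MNCompat P P :=
  ⟨P, h, hne, by simp⟩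

lemma not_compat_countable {P Q : Set Cantor} (hP : IsClosed P) (hQ : IsClosed Q)
    (h : ¬ MNCompat P Q) : (P ∩ Q).Countable := by
  by_contra hc
  obtain ⟨D, hD, hDne, hDsub⟩ :=
    exists_perfect_nonempty_of_isClosed_of_not_countable (hP.inter hQ) hc
  exact h ⟨D, hD, hDne, hDsub⟩

lemma exists_max_antichain : ∃ M : Set (Set Cantor), MNIsAnti M ∧ Set.range Az ⊆ M ∧
    ∀ P : Set Cantor, Perfect P → P.Nonempty → ∃ q ∈ M, MNCompat P q := by
  have hA0 : MNIsAnti (Set.range Az) := by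
    constructor
    · rintro _ ⟨z, rfl⟩; exact ⟨Az_perfect z, Az_nonempty z⟩
    · rintro _ ⟨z, rfl⟩ _ ⟨z', rfl⟩ hne ⟨R, hR, hRne, hRsub⟩
      have hzz : z ≠ z' := fun h => hne (by rw [h])
      rw [Set.disjoint_iff_inter_eq_empty.mp (Az_disjoint hzz)] at hRsub
      exact hRne.ne_empty (Set.subset_empty_iff.mp hRsub)
  have hzorn : ∀ c ⊆ {A | MNIsAnti A}, IsChain (· ⊆ ·) c → c.Nonempty →
      ∃ ub ∈ {A | MNIsAnti A}, ∀ s ∈ c, s ⊆ ub := by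
    intro c hc hchain _hne
    refine ⟨⋃₀ c, ⟨?_, ?_⟩, fun s hs => Set.subset_sUnion_of_mem hs⟩
    · rintro P ⟨A, hA, hPA⟩
      exact (hc hA).1 P hPA
    · intro P hP Q hQ hne
      obtain ⟨A, hA, hPA⟩ := hP
      obtain ⟨A', hA', hQA'⟩ := hQ
      rcases hchain.total hA hA' with hle | hle
      · exact (hc hA').2 (hle hPA) hQA' hne
      · exact (hc hA).2 hPA (hle hQA') hne
  obtain ⟨M, hsub, hmax⟩ := zorn_subset_nonempty {A | MNIsAnti A} hzorn (Set.range Az) hA0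
  refine ⟨M, hmax.1, hsub, fun P hP hPne => ?_⟩
  by_contra h
  push_neg at h
  have hPM : P ∉ M := fun hmem => h P hmem (compat_self hP hPne)
  have : MNIsAnti (insert P M) := by
    constructor
    · rintro Q (rfl | hQ)
      · exact ⟨hP, hPne⟩
      · exact hmax.1.1 Q hQ
    · intro Q hQ Q' hQ' hne
      rcases hQ with rfl | hQ <;> rcases hQ' with rfl | hQ'
      · exact absurd rfl hne
      · exact h Q' hQ'
      · intro ⟨R, h1, h2, h3⟩
        exact h Q hQ ⟨R, h1, h2, by rw [Set.inter_comm] at h3; exact h3⟩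
      · exact hmax.1.2 hQ hQ' hne
  have := hmax.2 this (Set.subset_insert P M)
  exact hPM (this (Set.mem_insert P M))

theorem stmt2 : ∃ Y : Set Cantor, MarczewskiNull Y ∧ #Y = Cardinal.continuum := by
  obtain ⟨M, hanti, hA0, hmax⟩ := exists_max_antichain
  have hMperf : ∀ P ∈ M, Perfect P ∧ P.Nonempty := hanti.1
  -- cardinality of M
  have hMle : #M ≤ 𝔠 := mk_closed_le fun C hC => (hMperf C hC).1.closed
  have hMge : 𝔠 ≤ #M := by
    rw [← mk_cantor]
    refine Cardinal.mk_le_of_injective (f := fun z => (⟨Az z, hA0 ⟨z, rfl⟩⟩ : M)) ?_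
    intro z z' h
    by_contra hne
    have hd := Az_disjoint hne
    obtain ⟨x, hx⟩ := Az_nonempty z
    have : x ∈ Az z' := by rw [← show Az z = Az z' from congrArg Subtype.val h]; exact hx
    exact Set.disjoint_left.mp hd hx this
  have hMeq : #M = 𝔠 := le_antisymm hMle hMge
  -- index type
  set ι := Cardinal.continuum.ord.ToType with hι
  have hιcard : #ι = 𝔠 := by rw [hι, Cardinal.mk_ord_toType]
  obtain ⟨e⟩ : Nonempty (ι ≃ M) := by
    rw [← Cardinal.eq, hιcard, hMeq]
  -- choose points
  have hpick : ∀ i : ι, (((e i : Set Cantor)) \ ⋃ j : {j : ι // j < i}, ((e j : Set Cantor) ∩ (e i : Set Cantor))).Nonempty := by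
    intro i
    set U := ⋃ j : {j : ι // j < i}, ((e (j : ι) : Set Cantor) ∩ (e i : Set Cantor)) with hU
    have hUsmall : #U < 𝔠 := by
      have h1 : #U ≤ #{j : ι // j < i} * ⨆ j : {j : ι // j < i}, #((e (j : ι) : Set Cantor) ∩ (e i : Set Cantor) : Set Cantor) :=
        Cardinal.mk_iUnion_le _
      have h2 : (⨆ j : {j : ι // j < i}, #((e (j : ι) : Set Cantor) ∩ (e i : Set Cantor) : Set Cantor)) ≤ ℵ₀ := by
        refine ciSup_le' fun j => ?_
        rw [Cardinal.mk_le_aleph0_iff]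
        refine not_compat_countable ((hMperf _ (e (j : ι)).2).1.closed) ((hMperf _ (e i).2).1.closed) ?_
        refine hanti.2 (e (j : ι)).2 (e i).2 ?_
        intro hcongr
        have : (j : ι) = i := e.injective (Subtype.ext hcongr)
        have hj2 := j.2
        rw [this] at hj2
        exact lt_irrefl i hj2
      have h3 : #{j : ι // j < i} < 𝔠 := Cardinal.mk_Iio_ord_toType i
      calc #U ≤ _ := h1
      _ < 𝔠 := Cardinal.mul_lt_of_lt Cardinal.aleph0_le_continuum h3
        (lt_of_le_of_lt h2 Cardinal.aleph0_lt_continuum)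
    by_contra hempty
    rw [Set.not_nonempty_iff_eq_empty, Set.diff_eq_empty] at hempty
    have : #(e i : Set Cantor) < 𝔠 := lt_of_le_of_lt (Cardinal.mk_le_mk_of_subset hempty) hUsmall
    exact absurd (continuum_le_perfect (hMperf _ (e i).2).1 (hMperf _ (e i).2).2) (not_le.mpr this)
  choose y hy using hpick
  have hymem : ∀ i, y i ∈ (e i : Set Cantor) := fun i => (hy i).1
  have hynot : ∀ i j, j < i → y i ∉ (e j : Set Cantor) := by
    intro i j hj hmem
    exact (hy i).2 (Set.mem_iUnion.mpr ⟨⟨j, hj⟩, hmem, (hy i).1⟩)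
  have hyinj : Function.Injective y := by
    intro i j h
    by_contra hne
    rcases lt_or_gt_of_ne hne with hlt | hlt
    · exact hynot j i hlt (h ▸ hymem i)
    · exact hynot i j hlt (h ▸ hymem j)
  refine ⟨Set.range y, ?_, by rw [Cardinal.mk_range_eq y hyinj, hιcard]⟩
  rintro P ⟨hP, hPne⟩
  obtain ⟨q, hqM, R, hR, hRne, hRsub⟩ := hmax P hP hPne
  obtain ⟨i, hi⟩ : ∃ i : ι, e i = (⟨q, hqM⟩ : M) := ⟨e.symm ⟨q, hqM⟩, e.apply_symm_apply _⟩
  have hqi : (e i : Set Cantor) = q := by rw [hi]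
  -- the points that may lie in R
  have hSsmall : #(y '' {j : ι | j ≤ i}) < 𝔠 := by
    have h1 : #(y '' {j : ι | j ≤ i}) ≤ #{j : ι | j ≤ i} := Cardinal.mk_image_le
    have h2 : {j : ι | j ≤ i} ⊆ insert i {j : ι | j < i} := by
      intro j hj
      rcases eq_or_lt_of_le (show j ≤ i from hj) with rfl | h
      · exact Set.mem_insert _ _
      · exact Set.mem_insert_of_mem _ h
    have h3 : #{j : ι | j ≤ i} ≤ #(insert i {j : ι | j < i} : Set ι) := Cardinal.mk_le_mk_of_subset h2
    have h4 : #(insert i {j : ι | j < i} : Set ι) ≤ #{j : ι | j < i} + 1 := Cardinal.mk_insert_le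
    have h5 : #{j : ι | j < i} < 𝔠 := Cardinal.mk_Iio_ord_toType i
    calc #(y '' {j : ι | j ≤ i}) ≤ _ := h1
    _ ≤ _ := h3
    _ ≤ _ := h4
    _ < 𝔠 := Cardinal.add_lt_of_lt Cardinal.aleph0_le_continuum h5 (Cardinal.one_lt_aleph0.trans Cardinal.aleph0_lt_continuum)
  obtain ⟨Q, hQ, hQne, hQsub, hQS⟩ := avoid_small hR hRne hSsmall
  refine ⟨Q, ⟨hQ, hQne⟩, hQsub.trans (hRsub.trans Set.inter_subset_left), ?_⟩
  ext x
  simp only [Set.mem_inter_iff, Set.mem_empty_iff_false, iff_false, not_and]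
  rintro hxQ ⟨j, rfl⟩
  rcases le_or_gt j i with hji | hij
  · have hmem : y j ∈ Q ∩ y '' {j : ι | j ≤ i} := ⟨hxQ, Set.mem_image_of_mem y hji⟩
    rw [hQS] at hmem
    exact Set.notMem_empty _ hmem
  · exact hynot j i hij (hqi ▸ (hRsub (hQsub hxQ)).2)

end MNaux
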